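/- If φ is a bounded holomorphic function on D^n satisfying sup_{z∈D^n}(∏_{j=1}^n(1-|z_j|²))·(Σ_{j=1}^n log(2/(1-|z_j|²)))·|∂^n φ/∂z_1⋯∂z_n(z)| < ∞, then φ is a multiplier from the sum Bloch space 𝔹(D^n) to the product Bloch space B(D^n): ‖φf‖_{B(D^n)} ≤ C(‖φ‖_∞ + ‖φ‖_{𝔹_L})‖f‖_𝔹 for all f ∈ 𝔹(D^n). -/

import Mathlib

/-- The open unit polydisc in `ℂⁿ`. -/
def polydisc (n : ℕ) : Set (Fin n → ℂ) := {z | ∀ j, ‖z j‖ < 1}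

/-- Partial (complex) derivative in the `j`-th variable. -/
noncomputable def pderivAt (n : ℕ) (j : Fin n) (f : (Fin n → ℂ) → ℂ) :
    (Fin n → ℂ) → ℂ :=
  fun z => deriv (fun w : ℂ => f (Function.update z j w)) (z j)

/-- Iterated mixed partial derivative, once in each variable of the list. -/
noncomputable def mderiv (n : ℕ) : List (Fin n) → ((Fin n → ℂ) → ℂ) → ((Fin n → ℂ) → ℂ)
  | [], f => f
  | j :: l, f => pderivAt n j (mderiv n l f)

open Metric Set Function

lemma cauchy1 {g : ℂ → ℂ} {c : ℂ} {R M : ℝ} (hR : 0 < R)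
    (hd : DifferentiableOn ℂ g (ball c R))
    (hM : ∀ w ∈ ball c R, ‖g w‖ ≤ M) :
    ‖deriv g c‖ ≤ 2 * M / R := by
  have hr : (0:ℝ) < R/2 := by linarith
  have hsub : closedBall c (R/2) ⊆ ball c R := by
    apply closedBall_subset_ball; linarith
  have hdc : DiffContOnCl ℂ g (ball c (R/2)) := hd.diffContOnCl_ball hsub
  have := Complex.norm_deriv_le_of_forall_mem_sphere_norm_le hr hdc
    (fun w hw => hM w (hsub (sphere_subset_closedBall hw)))
  calc ‖deriv g c‖ ≤ M / (R/2) := this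
    _ = 2 * M / R := by ring

/-- Quantitative convergence of difference quotients. -/
lemma diffquot_est {g : ℂ → ℂ} {c : ℂ} {R M : ℝ} (hR : 0 < R)
    (hd : DifferentiableOn ℂ g (ball c R))
    (hM : ∀ w ∈ ball c R, ‖g w‖ ≤ M)
    {h : ℂ} (hne : h ≠ 0) (hh : ‖h‖ ≤ R / 8) :
    ‖(g (c + h) - g c) / h - deriv g c‖ ≤ 64 * M / R ^ 2 * ‖h‖ := by
  have hM0 : 0 ≤ M := le_trans (norm_nonneg _) (hM c (mem_ball_self hR))
  have hd' : DifferentiableOn ℂ (deriv g) (ball c R) :=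
    ((hd.analyticOnNhd isOpen_ball).deriv).differentiableOn
  -- bound for deriv g on ball c (R/2)
  have hb1 : ∀ w ∈ ball c (R/2), ‖deriv g w‖ ≤ 4 * M / R := by
    intro w hw
    have hsub : ball w (R/2) ⊆ ball c R := by
      apply ball_subset_ball'; rw [mem_ball] at hw; linarith [hw.le]
    have := cauchy1 (by linarith : (0:ℝ) < R/2) (hd.mono hsub) (fun v hv => hM v (hsub hv))
    calc ‖deriv g w‖ ≤ 2 * M / (R/2) := this
      _ = 4 * M / R := by ring
  -- bound for second derivative on ball c (R/4)
  have hb2 : ∀ w ∈ ball c (R/4), ‖deriv (deriv g) w‖ ≤ 32 * M / R ^ 2 := by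
    intro w hw
    have hsub : ball w (R/4) ⊆ ball c (R/2) := by
      apply ball_subset_ball'; rw [mem_ball] at hw; linarith [hw.le]
    have := cauchy1 (by linarith : (0:ℝ) < R/4)
      (hd'.mono (hsub.trans (ball_subset_ball (by linarith))))
      (fun v hv => hb1 v (hsub hv))
    calc ‖deriv (deriv g) w‖ ≤ 2 * (4 * M / R) / (R/4) := this
      _ = 32 * M / R ^ 2 := by ring
  -- Lipschitz bound for deriv g near c
  have hball4 : ball c (R/4) ⊆ ball c R := ball_subset_ball (by linarith)
  have hlip : ∀ w ∈ ball c (R/4),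
      ‖deriv g w - deriv g c‖ ≤ 32 * M / R ^ 2 * ‖w - c‖ := by
    intro w hw
    have := Convex.norm_image_sub_le_of_norm_deriv_le (f := deriv g) (s := ball c (R/4))
      (fun x hx => hd'.differentiableAt (isOpen_ball.mem_nhds (hball4 hx)))
      hb2 (convex_ball c (R/4)) (mem_ball_self (by linarith)) hw
    simpa using this
  -- MVT for G ζ = g ζ - deriv g c * ζ on ball c (2|h|)
  have habs : 0 < ‖h‖ := norm_pos_iff.mpr hne
  have hsub2 : ball c (2 * ‖h‖) ⊆ ball c (R/4) :=
    ball_subset_ball (by linarith)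
  have hder : ∀ x ∈ ball c (2 * ‖h‖),
      DifferentiableAt ℂ (fun ζ => g ζ - deriv g c * ζ) x := by
    intro x hx
    exact ((hd.differentiableAt (isOpen_ball.mem_nhds (hball4 (hsub2 hx)))).sub
      ((differentiableAt_fun_id.const_mul _)))
  have hGd : ∀ x ∈ ball c (2 * ‖h‖),
      ‖deriv (fun ζ => g ζ - deriv g c * ζ) x‖ ≤
        32 * M / R ^ 2 * (2 * ‖h‖) := by
    intro x hx
    have hx4 := hsub2 hx
    have : deriv (fun ζ => g ζ - deriv g c * ζ) x = deriv g x - deriv g c := by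
      rw [deriv_fun_sub (hd.differentiableAt (isOpen_ball.mem_nhds (hball4 hx4)))
        (differentiableAt_fun_id.const_mul _)]
      rw [deriv_const_mul_field]; simp
    rw [this]
    refine (hlip x hx4).trans ?_
    have : ‖x - c‖ ≤ 2 * ‖h‖ := by
      rw [mem_ball, Complex.dist_eq] at hx; exact hx.le
    have h32 : 0 ≤ 32 * M / R ^ 2 := by positivity
    nlinarith [norm_nonneg (x - c)]
  have hch : c + h ∈ ball c (2 * ‖h‖) := by
    rw [mem_ball, dist_eq_norm]; simp; linarith
  have := Convex.norm_image_sub_le_of_norm_deriv_le hder hGd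
    (convex_ball c (2 * ‖h‖)) (mem_ball_self (by linarith)) hch
  have key : ‖g (c + h) - g c - deriv g c * h‖ ≤
      64 * M / R ^ 2 * ‖h‖ * ‖h‖ := by
    have e1 : g (c + h) - deriv g c * (c + h) - (g c - deriv g c * c)
        = g (c + h) - g c - deriv g c * h := by ring
    have e2 : (c + h) - c = h := by ring
    rw [e1, e2] at this
    calc ‖g (c + h) - g c - deriv g c * h‖
        ≤ 32 * M / R ^ 2 * (2 * ‖h‖) * ‖h‖ := this
      _ = 64 * M / R ^ 2 * ‖h‖ * ‖h‖ := by ring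
  have e3 : (g (c + h) - g c) / h - deriv g c
      = (g (c + h) - g c - deriv g c * h) / h := by
    field_simp
  rw [e3, norm_div]
  rw [div_le_iff₀ habs]
  exact key
open Metric Set Function

lemma polydisc_eq (n : ℕ) : polydisc n = Set.pi Set.univ (fun _ : Fin n => ball (0:ℂ) 1) := by
  ext z; simp [polydisc, Complex.dist_eq, Set.mem_pi]

lemma isOpen_polydisc (n : ℕ) : IsOpen (polydisc n) := by
  rw [polydisc_eq]; exact isOpen_set_pi Set.finite_univ (fun _ _ => isOpen_ball)

lemma mem_polydisc_update {n : ℕ} {z : Fin n → ℂ} (hz : z ∈ polydisc n) (j : Fin n)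
    {u : ℂ} (hu : ‖u‖ < 1) : Function.update z j u ∈ polydisc n := by
  intro k
  rcases eq_or_ne k j with rfl | hk
  · simpa using hu
  · rw [Function.update_of_ne hk]; exact hz k

lemma mem_ball01 {u : ℂ} : u ∈ ball (0:ℂ) 1 ↔ ‖u‖ < 1 := by
  simp [Complex.dist_eq]

/-- Separately holomorphic and bounded on closed sub-polydiscs. -/
def SepHolo (n : ℕ) (F : (Fin n → ℂ) → ℂ) : Prop :=
  (∀ z ∈ polydisc n, ∀ j : Fin n,
    DifferentiableOn ℂ (fun u => F (Function.update z j u)) (ball (0:ℂ) 1)) ∧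
  (∀ r : ℝ, 0 ≤ r → r < 1 → ∃ M : ℝ, 0 ≤ M ∧
    ∀ z : Fin n → ℂ, (∀ j, ‖z j‖ ≤ r) → ‖F z‖ ≤ M)

/-- The affine slice map is differentiable. -/
lemma differentiable_update_slice {n : ℕ} (z : Fin n → ℂ) (j : Fin n) :
    Differentiable ℂ (fun u : ℂ => Function.update z j u) := by
  intro u
  have : (fun u : ℂ => Function.update z j u) =
      fun u : ℂ => (fun k => if k = j then u else z k) := by
    funext u; funext k
    rcases eq_or_ne k j with rfl | hk
    · simp
    · simp [Function.update_of_ne hk, hk]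
  rw [this]
  apply differentiableAt_pi.2
  intro k
  rcases eq_or_ne k j with rfl | hk
  · simpa using differentiableAt_fun_id
  · simp [hk]

lemma SepHolo.of_differentiableOn {n : ℕ} {F : (Fin n → ℂ) → ℂ}
    (hF : DifferentiableOn ℂ F (polydisc n)) : SepHolo n F := by
  constructor
  · intro z hz j u hu
    have hmem : Function.update z j u ∈ polydisc n :=
      mem_polydisc_update hz j (mem_ball01.mp hu)
    have h1 : DifferentiableAt ℂ F (Function.update z j u) :=
      hF.differentiableAt ((isOpen_polydisc n).mem_nhds hmem)
    exact (h1.comp u (differentiable_update_slice z j u)).differentiableWithinAt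
  · intro r hr0 hr1
    have hK : IsCompact (Set.pi Set.univ (fun _ : Fin n => closedBall (0:ℂ) r)) :=
      isCompact_univ_pi (fun _ => isCompact_closedBall _ _)
    have hKsub : Set.pi Set.univ (fun _ : Fin n => closedBall (0:ℂ) r) ⊆ polydisc n := by
      intro z hz j
      have := hz j (Set.mem_univ j)
      rw [mem_closedBall, Complex.dist_eq, sub_zero] at this
      linarith
    obtain ⟨M, hM⟩ := hK.exists_bound_of_continuousOn (hF.continuousOn.mono hKsub)
    refine ⟨max M 0, le_max_right _ _, fun z hz => ?_⟩
    have hzK : z ∈ Set.pi Set.univ (fun _ : Fin n => closedBall (0:ℂ) r) := by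
      intro j _; rw [mem_closedBall, Complex.dist_eq, sub_zero]; exact hz j
    exact le_trans (hM z hzK) (le_max_left _ _)
lemma SepHolo.pderiv {n : ℕ} {F : (Fin n → ℂ) → ℂ} (hF : SepHolo n F) (j : Fin n) :
    SepHolo n (pderivAt n j F) := by
  constructor
  · intro z hz i
    rcases eq_or_ne i j with rfl | hij
    · -- same variable: derivative of the slice
      have heq : (fun u => pderivAt n i F (Function.update z i u)) =
          deriv (fun u => F (Function.update z i u)) := by
        funext u
        simp only [pderivAt, Function.update_idem, Function.update_self]
      rw [heq]
      exact ((hF.1 z hz i).analyticOnNhd isOpen_ball).deriv.differentiableOn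
    · -- different variable: Weierstrass argument
      set c := z j with hc
      set Φ : ℂ → ℂ → ℂ := fun h u =>
        (F (Function.update (Function.update z i u) j (c + h)) -
          F (Function.update (Function.update z i u) j c)) / h with hΦ
      set L : ℂ → ℂ := fun u => pderivAt n j F (Function.update z i u) with hL
      have hcball : ‖c‖ < 1 := hz j
      have hLdq : ∀ u : ℂ, L u =
          deriv (fun v => F (Function.update (Function.update z i u) j v)) c := by
        intro u
        have : (Function.update z i u) j = c := Function.update_of_ne (Ne.symm hij) _ _
        rw [hL]; simp only [pderivAt, this]
      -- eventual differentiability of difference quotients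
      have hA : ∀ᶠ h in nhdsWithin (0:ℂ) {0}ᶜ, DifferentiableOn ℂ (Φ h) (ball 0 1) := by
        have hev : ∀ᶠ h in nhdsWithin (0:ℂ) {0}ᶜ, ‖h‖ < 1 - ‖c‖ := by
          apply eventually_nhdsWithin_of_eventually_nhds
          filter_upwards [Metric.ball_mem_nhds (0:ℂ) (by linarith : (0:ℝ) < 1 - ‖c‖)]
            with h hh
          rw [mem_ball, Complex.dist_eq, sub_zero] at hh; exact hh
        filter_upwards [hev] with h hh
        have hch : ‖c + h‖ < 1 :=
          lt_of_le_of_lt (norm_add_le _ _) (by linarith)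
        have sliceDiff : ∀ v : ℂ, ‖v‖ < 1 → DifferentiableOn ℂ
            (fun u => F (Function.update (Function.update z i u) j v)) (ball 0 1) := by
          intro v hv
          have hcomm : ∀ u : ℂ, Function.update (Function.update z i u) j v =
              Function.update (Function.update z j v) i u := by
            intro u; exact Function.update_comm hij u v z
          simp only [hcomm]
          exact hF.1 _ (mem_polydisc_update hz j hv) i
        exact ((sliceDiff _ hch).sub (sliceDiff _ hcball)).div_const h
      -- locally uniform convergence
      have hB : TendstoLocallyUniformlyOn Φ L (nhdsWithin (0:ℂ) {0}ᶜ) (ball 0 1) := by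
        rw [tendstoLocallyUniformlyOn_iff_forall_isCompact isOpen_ball]
        intro K hK hKc
        rcases K.eq_empty_or_nonempty with rfl | hKne
        · simp [TendstoUniformlyOn]
        obtain ⟨u₀, hu₀K, hu₀⟩ := hKc.exists_isMaxOn hKne continuous_norm.continuousOn
        rw [isMaxOn_iff] at hu₀
        set rK := ‖u₀‖ with hrK
        have hrK1 : rK < 1 := mem_ball01.mp (hK hu₀K)
        have hne : (Finset.univ : Finset (Fin n)).Nonempty := ⟨i, Finset.mem_univ i⟩
        set zmax := Finset.univ.sup' hne (fun k => ‖z k‖) with hzmax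
        have hzmax1 : zmax < 1 := by
          rw [hzmax, Finset.sup'_lt_iff]; intro k _; exact hz k
        have hzle : ∀ k, ‖z k‖ ≤ zmax := fun k =>
          Finset.le_sup' (f := fun k => ‖z k‖) (Finset.mem_univ k)
        set r2 := max rK zmax with hr2
        have hr20 : 0 ≤ r2 := le_trans (norm_nonneg u₀) (le_max_left _ _)
        have hr21 : r2 < 1 := max_lt hrK1 hzmax1
        set R := (1 - r2)/2 with hR
        have hR0 : 0 < R := by rw [hR]; linarith
        set r3 := (1 + r2)/2 with hr3
        have hr31 : r3 < 1 := by rw [hr3]; linarith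
        obtain ⟨M, hM0, hM⟩ := hF.2 r3 (by rw [hr3]; linarith) hr31
        have hcr2 : ‖c‖ ≤ r2 := le_trans (hzle j) (le_max_right _ _)
        -- the key uniform estimate
        have key : ∀ u ∈ K, ∀ h : ℂ, h ≠ 0 → ‖h‖ ≤ R/8 →
            ‖Φ h u - L u‖ ≤ 64 * M / R ^ 2 * ‖h‖ := by
          intro u huK h hne' hh
          have hur : ‖u‖ ≤ rK := hu₀ u huK
          have hu1 : ‖u‖ < 1 := lt_of_le_of_lt hur hrK1
          have hzu : Function.update z i u ∈ polydisc n := mem_polydisc_update hz i hu1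
          set g : ℂ → ℂ := fun v => F (Function.update (Function.update z i u) j v) with hg
          have hgd : DifferentiableOn ℂ g (ball c R) := by
            refine (hF.1 _ hzu j).mono ?_
            intro v hv
            rw [mem_ball, Complex.dist_eq] at hv
            rw [mem_ball01]
            calc ‖v‖ ≤ ‖v - c‖ + ‖c‖ := by
                  simpa using norm_add_le (v - c) c
              _ < R + r2 := by linarith
              _ < 1 := by rw [hR]; linarith
          have hgM : ∀ v ∈ ball c R, ‖g v‖ ≤ M := by
            intro v hv
            rw [mem_ball, Complex.dist_eq] at hv
            apply hM
            intro k
            rcases eq_or_ne k j with rfl | hkj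
            · rw [Function.update_self]
              calc ‖v‖ ≤ ‖v - c‖ + ‖c‖ := by
                    simpa using norm_add_le (v - c) c
                _ ≤ R + r2 := by linarith
                _ ≤ r3 := by rw [hR, hr3]; linarith
            · rw [Function.update_of_ne hkj]
              rcases eq_or_ne k i with rfl | hki
              · rw [Function.update_self]
                calc ‖u‖ ≤ rK := hur
                  _ ≤ r2 := le_max_left _ _
                  _ ≤ r3 := by rw [hr3]; linarith
              · rw [Function.update_of_ne hki]
                calc ‖z k‖ ≤ zmax := hzle k
                  _ ≤ r2 := le_max_right _ _
                  _ ≤ r3 := by rw [hr3]; linarith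
          have := diffquot_est hR0 hgd hgM hne' hh
          have hΦeq : Φ h u = (g (c + h) - g c) / h := rfl
          rw [hΦeq, hLdq u]
          exact this
        -- conclude uniform convergence on K
        rw [Metric.tendstoUniformlyOn_iff]
        intro ε hε
        have hδ : 0 < min (R/8) (ε / (64 * M / R ^ 2 + 1)) := by
          apply lt_min (by linarith)
          apply div_pos hε
          positivity
        have hev : ∀ᶠ h in nhdsWithin (0:ℂ) {0}ᶜ,
            ‖h‖ < min (R/8) (ε / (64 * M / R ^ 2 + 1)) ∧ h ≠ 0 := by
          apply Filter.Eventually.and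
          · apply eventually_nhdsWithin_of_eventually_nhds
            filter_upwards [Metric.ball_mem_nhds (0:ℂ) hδ] with h hh
            rw [mem_ball, Complex.dist_eq, sub_zero] at hh; exact hh
          · exact eventually_mem_nhdsWithin
        filter_upwards [hev] with h ⟨hh1, hh2⟩
        intro u huK
        rw [dist_comm, Complex.dist_eq]
        have := key u huK h hh2 (le_of_lt (lt_of_lt_of_le hh1 (min_le_left _ _)))
        have h2 : ‖h‖ < ε / (64 * M / R ^ 2 + 1) :=
          lt_of_lt_of_le hh1 (min_le_right _ _)
        have hpos : (0:ℝ) < 64 * M / R ^ 2 + 1 := by positivity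
        calc ‖Φ h u - L u‖ ≤ 64 * M / R ^ 2 * ‖h‖ := this
          _ ≤ (64 * M / R ^ 2 + 1) * ‖h‖ := by
              have := norm_nonneg h; nlinarith
          _ < ε := by
              rw [← lt_div_iff₀' hpos]; exact h2
      exact hB.differentiableOn hA isOpen_ball
  · -- boundedness
    intro r hr0 hr1
    set r' := (1 + r)/2 with hr'
    set ρ := (1 - r)/2 with hρ
    have hρ0 : 0 < ρ := by rw [hρ]; linarith
    obtain ⟨M, hM0, hM⟩ := hF.2 r' (by rw [hr']; linarith) (by rw [hr']; linarith)
    refine ⟨2 * M / ρ, by positivity, ?_⟩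
    intro z hzr
    have hz : z ∈ polydisc n := fun k => lt_of_le_of_lt (hzr k) hr1
    have hgd : DifferentiableOn ℂ (fun u => F (Function.update z j u)) (ball (z j) ρ) := by
      refine (hF.1 z hz j).mono ?_
      intro v hv
      rw [mem_ball, Complex.dist_eq] at hv
      rw [mem_ball01]
      calc ‖v‖ ≤ ‖v - z j‖ + ‖z j‖ := by
            simpa using norm_add_le (v - z j) (z j)
        _ < ρ + r := by linarith [hzr j]
        _ < 1 := by rw [hρ]; linarith
    have hgM : ∀ v ∈ ball (z j) ρ, ‖F (Function.update z j v)‖ ≤ M := by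
      intro v hv
      rw [mem_ball, Complex.dist_eq] at hv
      apply hM
      intro k
      rcases eq_or_ne k j with rfl | hkj
      · rw [Function.update_self]
        calc ‖v‖ ≤ ‖v - z k‖ + ‖z k‖ := by
              simpa using norm_add_le (v - z k) (z k)
          _ ≤ ρ + r := by linarith [hzr k]
          _ ≤ r' := by rw [hρ, hr']; linarith
      · rw [Function.update_of_ne hkj]
        exact le_trans (hzr k) (by rw [hr']; linarith)
    exact cauchy1 hρ0 hgd hgM
lemma SepHolo.mderiv {n : ℕ} {F : (Fin n → ℂ) → ℂ} (hF : SepHolo n F) :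
    ∀ l : List (Fin n), SepHolo n (mderiv n l F)
  | [] => hF
  | j :: l => (SepHolo.mderiv hF l).pderiv j

lemma SepHolo.sliceDiffAt {n : ℕ} {F : (Fin n → ℂ) → ℂ} (hF : SepHolo n F)
    {z : Fin n → ℂ} (hz : z ∈ polydisc n) (j : Fin n) :
    DifferentiableAt ℂ (fun u => F (Function.update z j u)) (z j) := by
  have := hF.1 z hz j
  exact this.differentiableAt (isOpen_ball.mem_nhds (mem_ball01.mpr (hz j)))

lemma SepHolo.mul {n : ℕ} {F G : (Fin n → ℂ) → ℂ} (hF : SepHolo n F) (hG : SepHolo n G) :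
    SepHolo n (fun w => F w * G w) := by
  constructor
  · intro z hz j
    exact (hF.1 z hz j).mul (hG.1 z hz j)
  · intro r hr0 hr1
    obtain ⟨M, hM0, hM⟩ := hF.2 r hr0 hr1
    obtain ⟨N, hN0, hN⟩ := hG.2 r hr0 hr1
    refine ⟨M * N, by positivity, fun z hz => ?_⟩
    rw [norm_mul]
    exact mul_le_mul (hM z hz) (hN z hz) (norm_nonneg _) hM0

lemma pderivAt_congr {n : ℕ} {F G : (Fin n → ℂ) → ℂ}
    (hFG : ∀ w ∈ polydisc n, F w = G w) {z : Fin n → ℂ} (hz : z ∈ polydisc n) (j : Fin n) :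
    pderivAt n j F z = pderivAt n j G z := by
  apply Filter.EventuallyEq.deriv_eq
  have : ∀ᶠ u in nhds (z j), u ∈ ball (0:ℂ) 1 :=
    isOpen_ball.eventually_mem (mem_ball01.mpr (hz j))
  filter_upwards [this] with u hu
  exact hFG _ (mem_polydisc_update hz j (mem_ball01.mp hu))

lemma pderivAt_mul {n : ℕ} {F G : (Fin n → ℂ) → ℂ} (hF : SepHolo n F) (hG : SepHolo n G)
    {z : Fin n → ℂ} (hz : z ∈ polydisc n) (j : Fin n) :
    pderivAt n j (fun w => F w * G w) z =
      pderivAt n j F z * G z + F z * pderivAt n j G z := by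
  have h1 := hF.sliceDiffAt hz j
  have h2 := hG.sliceDiffAt hz j
  have : pderivAt n j (fun w => F w * G w) z =
      deriv (fun u => F (Function.update z j u) * G (Function.update z j u)) (z j) := rfl
  rw [this, deriv_fun_mul h1 h2]
  simp only [Function.update_eq_self]
  rfl

lemma SepHolo.const {n : ℕ} (c : ℂ) : SepHolo n (fun _ => c) := by
  refine ⟨fun z hz j => differentiableOn_const c, fun r hr0 hr1 => ⟨‖c‖, norm_nonneg c, fun z hz => le_refl _⟩⟩

lemma SepHolo.add {n : ℕ} {F G : (Fin n → ℂ) → ℂ} (hF : SepHolo n F) (hG : SepHolo n G) :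
    SepHolo n (fun w => F w + G w) := by
  constructor
  · intro z hz j
    exact (hF.1 z hz j).add (hG.1 z hz j)
  · intro r hr0 hr1
    obtain ⟨M, hM0, hM⟩ := hF.2 r hr0 hr1
    obtain ⟨N, hN0, hN⟩ := hG.2 r hr0 hr1
    exact ⟨M + N, by positivity, fun z hz =>
      le_trans (norm_add_le _ _) (add_le_add (hM z hz) (hN z hz))⟩

lemma SepHolo.listsum {n : ℕ} (L : List ((Fin n → ℂ) → ℂ)) (hL : ∀ g ∈ L, SepHolo n g) :
    SepHolo n (fun w => (L.map (fun g => g w)).sum) := by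
  induction L with
  | nil => simpa using SepHolo.const 0
  | cons g L ih =>
    simp only [List.map_cons, List.sum_cons]
    exact (hL g (List.mem_cons_self)).add
      (ih (fun g' hg' => hL g' (List.mem_cons_of_mem _ hg')))

lemma pderivAt_add {n : ℕ} {F G : (Fin n → ℂ) → ℂ} (hF : SepHolo n F) (hG : SepHolo n G)
    {z : Fin n → ℂ} (hz : z ∈ polydisc n) (j : Fin n) :
    pderivAt n j (fun w => F w + G w) z = pderivAt n j F z + pderivAt n j G z := by
  have h1 := hF.sliceDiffAt hz j
  have h2 := hG.sliceDiffAt hz j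
  have : pderivAt n j (fun w => F w + G w) z =
      deriv (fun u => F (Function.update z j u) + G (Function.update z j u)) (z j) := rfl
  rw [this, deriv_fun_add h1 h2]
  rfl

lemma pderivAt_listsum {n : ℕ} (L : List ((Fin n → ℂ) → ℂ))
    (hL : ∀ g ∈ L, SepHolo n g) {z : Fin n → ℂ} (hz : z ∈ polydisc n) (j : Fin n) :
    pderivAt n j (fun w => (L.map (fun g => g w)).sum) z =
      (L.map (fun g => pderivAt n j g z)).sum := by
  induction L with
  | nil =>
    simp only [List.map_nil, List.sum_nil]
    exact deriv_const _ _
  | cons g L ih =>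
    have hg := hL g (List.mem_cons_self)
    have hL' : ∀ g' ∈ L, SepHolo n g' := fun g' hg' => hL g' (List.mem_cons_of_mem _ hg')
    have hsum := SepHolo.listsum L hL'
    simp only [List.map_cons, List.sum_cons]
    rw [← ih hL']
    exact pderivAt_add hg hsum hz j
/-- All ways to split the derivative list between the two factors. -/
def splits {n : ℕ} : List (Fin n) → List (List (Fin n) × List (Fin n))
  | [] => [([], [])]
  | j :: l => ((splits l).map fun p => (j :: p.1, p.2)) ++
      ((splits l).map fun p => (p.1, j :: p.2))

lemma leibniz {n : ℕ} {F G : (Fin n → ℂ) → ℂ} (hF : SepHolo n F) (hG : SepHolo n G) :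
    ∀ (l : List (Fin n)) (z : Fin n → ℂ), z ∈ polydisc n →
      mderiv n l (fun w => F w * G w) z =
        ((splits l).map (fun p => mderiv n p.1 F z * mderiv n p.2 G z)).sum := by
  intro l
  induction l with
  | nil => intro z hz; simp [mderiv, splits]
  | cons j l ih =>
    intro z hz
    have step1 : mderiv n (j :: l) (fun w => F w * G w) z =
        pderivAt n j (fun w =>
          (((splits l).map fun p => (fun w => mderiv n p.1 F w * mderiv n p.2 G w)).map
            (fun g => g w)).sum) z := by
      show pderivAt n j (mderiv n l fun w => F w * G w) z = _
      apply pderivAt_congr _ hz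
      intro w hw
      rw [ih w hw, List.map_map]
      rfl
    have hmem : ∀ g ∈ (splits l).map fun p => (fun w => mderiv n p.1 F w * mderiv n p.2 G w),
        SepHolo n g := by
      intro g hg
      rw [List.mem_map] at hg
      obtain ⟨p, _, rfl⟩ := hg
      exact (hF.mderiv p.1).mul (hG.mderiv p.2)
    rw [step1, pderivAt_listsum _ hmem hz, List.map_map]
    have step2 : ((splits l).map ((fun g => pderivAt n j g z) ∘
        fun p => (fun w => mderiv n p.1 F w * mderiv n p.2 G w))).sum =
        ((splits l).map (fun p => mderiv n (j :: p.1) F z * mderiv n p.2 G z +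
          mderiv n p.1 F z * mderiv n (j :: p.2) G z)).sum := by
      congr 1
      apply List.map_congr_left
      intro p _
      exact pderivAt_mul (hF.mderiv p.1) (hG.mderiv p.2) hz j
    rw [step2]
    show _ = ((splits (j :: l)).map
      (fun p => mderiv n p.1 F z * mderiv n p.2 G z)).sum
    rw [splits, List.map_append, List.sum_append, List.map_map, List.map_map]
    rw [← List.sum_map_add]
    rfl
lemma one_sub_sq_pos {a : ℝ} (h0 : 0 ≤ a) (h1 : a < 1) : 0 < 1 - a ^ 2 := by nlinarith

lemma iterated_cauchy {n : ℕ} (l : List (Fin n)) (hnd : l.Nodup) (s : Finset (Fin n))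
    (hdisj : ∀ j ∈ l, j ∉ s) {G : (Fin n → ℂ) → ℂ} (hG : SepHolo n G) {M : ℝ} (hM0 : 0 ≤ M)
    (hbd : ∀ w ∈ polydisc n, ‖G w‖ ≤ M * ∏ k ∈ s, (1 - ‖w k‖ ^ 2)⁻¹) :
    ∀ z ∈ polydisc n, ‖mderiv n l G z‖ ≤
      8 ^ l.length * M * ∏ k ∈ s ∪ l.toFinset, (1 - ‖z k‖ ^ 2)⁻¹ := by
  induction l with
  | nil =>
    intro z hz
    simpa [mderiv] using hbd z hz
  | cons j l ih =>
    rw [List.nodup_cons] at hnd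
    obtain ⟨hjl, hnd'⟩ := hnd
    have hdisj' : ∀ i ∈ l, i ∉ s := fun i hi => hdisj i (List.mem_cons_of_mem _ hi)
    have hjs : j ∉ s := hdisj j (List.mem_cons_self)
    have hjT : j ∉ s ∪ l.toFinset := by
      rw [Finset.mem_union, List.mem_toFinset]
      push_neg
      exact ⟨hjs, hjl⟩
    intro z hz
    set a := ‖z j‖ with ha
    have ha0 : 0 ≤ a := norm_nonneg _
    have ha1 : a < 1 := hz j
    set ρ := (1 - a)/2 with hρ
    have hρ0 : 0 < ρ := by rw [hρ]; linarith
    set P := ∏ k ∈ s ∪ l.toFinset, (1 - ‖z k‖ ^ 2)⁻¹ with hP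
    have hP0 : 0 ≤ P := by
      apply Finset.prod_nonneg
      intro k _
      have := one_sub_sq_pos (norm_nonneg (z k)) (hz k)
      positivity
    -- the slice of the inner mixed derivative
    have hgd : DifferentiableOn ℂ (fun u => mderiv n l G (Function.update z j u))
        (ball (z j) ρ) := by
      refine ((hG.mderiv l).1 z hz j).mono ?_
      intro v hv
      rw [mem_ball, Complex.dist_eq] at hv
      rw [mem_ball01]
      calc ‖v‖ ≤ ‖v - z j‖ + ‖z j‖ := by
            simpa using norm_add_le (v - z j) (z j)
        _ < ρ + a := by linarith
        _ < 1 := by rw [hρ]; linarith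
    have hgM : ∀ v ∈ ball (z j) ρ,
        ‖mderiv n l G (Function.update z j v)‖ ≤ 8 ^ l.length * M * P := by
      intro v hv
      rw [mem_ball, Complex.dist_eq] at hv
      have hv1 : ‖v‖ < 1 := by
        calc ‖v‖ ≤ ‖v - z j‖ + ‖z j‖ := by
              simpa using norm_add_le (v - z j) (z j)
          _ < ρ + a := by linarith
          _ < 1 := by rw [hρ]; linarith
      have hw : Function.update z j v ∈ polydisc n := mem_polydisc_update hz j hv1
      have := ih hnd' hdisj' _ hw
      have hprodeq : ∏ k ∈ s ∪ l.toFinset,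
          (1 - ‖Function.update z j v k‖ ^ 2)⁻¹ = P := by
        apply Finset.prod_congr rfl
        intro k hk
        have hkj : k ≠ j := fun h => hjT (h ▸ hk)
        rw [Function.update_of_ne hkj]
      rwa [hprodeq] at this
    have hcau := cauchy1 hρ0 hgd hgM
    have step : ‖mderiv n (j :: l) G z‖ ≤ 2 * (8 ^ l.length * M * P) / ρ := hcau
    have hfac : 2 / ρ ≤ 8 * (1 - a ^ 2)⁻¹ := by
      rw [hρ]
      rw [div_le_iff₀ (by linarith : (0:ℝ) < (1-a)/2)]
      have h2 : 0 < 1 - a ^ 2 := one_sub_sq_pos ha0 ha1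
      have h3 : (1 - a ^ 2)⁻¹ = 1 / (1 - a ^ 2) := by rw [one_div]
      rw [h3, mul_comm 8 (1 / (1 - a^2)), mul_assoc, div_mul_eq_mul_div, one_mul,
        le_div_iff₀ h2]
      nlinarith
    calc ‖mderiv n (j :: l) G z‖ ≤ 2 * (8 ^ l.length * M * P) / ρ := step
      _ = (2/ρ) * (8 ^ l.length * M * P) := by ring
      _ ≤ (8 * (1 - a ^ 2)⁻¹) * (8 ^ l.length * M * P) := by
          apply mul_le_mul_of_nonneg_right hfac
          positivity
      _ = 8 ^ (j :: l).length * M * ((1 - a ^ 2)⁻¹ * P) := by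
          rw [List.length_cons]; ring
      _ = 8 ^ (j :: l).length * M * ∏ k ∈ s ∪ (j :: l).toFinset,
            (1 - ‖z k‖ ^ 2)⁻¹ := by
          congr 1
          rw [List.toFinset_cons, Finset.union_insert, Finset.prod_insert hjT, ha]
lemma growth_step {n : ℕ} {f : (Fin n → ℂ) → ℂ} (hf : SepHolo n f) {B : ℝ} (hB0 : 0 ≤ B)
    (hB : ∀ w ∈ polydisc n, ∀ j : Fin n,
      (1 - ‖w j‖ ^ 2) * ‖pderivAt n j f w‖ ≤ B)
    {z : Fin n → ℂ} (hz : z ∈ polydisc n) (j : Fin n) :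
    ‖f z‖ ≤ ‖f (Function.update z j 0)‖ +
      B * Real.log (2 / (1 - ‖z j‖ ^ 2)) := by
  set a := ‖z j‖ with ha
  have ha0 : 0 ≤ a := norm_nonneg _
  have ha1 : a < 1 := hz j
  set sl : ℂ → ℂ := fun u => f (Function.update z j u) with hsl
  have hsld : DifferentiableOn ℂ sl (ball (0:ℂ) 1) := hf.1 z hz j
  set g : ℝ → ℂ := fun t => sl ((t:ℂ) * z j) with hg
  set g' : ℝ → ℂ := fun t => deriv sl ((t:ℂ) * z j) * z j with hg'
  set E : ℝ → ℝ := fun t => ‖f (Function.update z j 0)‖ -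
    B * Real.log (1 - t * a) with hE
  set E' : ℝ → ℝ := fun t => B * a / (1 - t * a) with hE'
  have hmem : ∀ t : ℝ, t ∈ Set.Icc (0:ℝ) 1 → (t:ℂ) * z j ∈ ball (0:ℂ) 1 := by
    intro t ht
    rw [mem_ball01, norm_mul, Complex.norm_real, Real.norm_eq_abs, abs_of_nonneg ht.1, ← ha]
    nlinarith [ht.2]
  have hgc : ContinuousOn g (Set.Icc 0 1) := by
    apply (hsld.continuousOn.comp (Continuous.continuousOn (by continuity)))
    intro t ht
    exact hmem t ht
  have hgd : ∀ t ∈ Set.Ico (0:ℝ) 1, HasDerivWithinAt g (g' t) (Set.Ici t) t := by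
    intro t ht
    have h1 : HasDerivAt (fun u : ℂ => sl (u * z j)) (deriv sl ((t:ℂ) * z j) * z j) (t:ℝ) := by
      have hd : HasDerivAt sl (deriv sl ((t:ℂ) * z j)) ((t:ℂ) * z j) :=
        ((hsld.differentiableAt (isOpen_ball.mem_nhds
          (hmem t ⟨ht.1, ht.2.le⟩))).hasDerivAt)
      have hm : HasDerivAt (fun u : ℂ => u * z j) (z j) (t:ℂ) := by
        simpa using (hasDerivAt_id (t:ℂ)).mul_const (z j)
      exact hd.comp (t:ℂ) hm
    exact (h1.comp_ofReal).hasDerivWithinAt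
  have hEc : ContinuousOn E (Set.Icc 0 1) := by
    apply ContinuousOn.sub continuousOn_const
    apply ContinuousOn.mul continuousOn_const
    apply ContinuousOn.log
    · fun_prop
    · intro t ht
      nlinarith [ht.1, ht.2]
  have hEd : ∀ t ∈ Set.Ico (0:ℝ) 1, HasDerivWithinAt E (E' t) (Set.Ici t) t := by
    intro t ht
    have hpos : 0 < 1 - t * a := by nlinarith [ht.1, ht.2]
    have h1 : HasDerivAt (fun t : ℝ => 1 - t * a) (-a) t := by
      rw [show -a = (0:ℝ) - 1 * a by ring]
      exact (hasDerivAt_const t (1:ℝ)).sub ((hasDerivAt_id t).mul_const a)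
    have h2 : HasDerivAt (fun t : ℝ => Real.log (1 - t * a)) (-a / (1 - t * a)) t := by
      have := (Real.hasDerivAt_log hpos.ne').comp t h1
      rw [show -a / (1 - t * a) = (1 - t * a)⁻¹ * -a by ring]
      exact this
    have h3 : HasDerivAt (fun x : ℝ => ‖f (Function.update z j 0)‖ -
        B * Real.log (1 - x * a)) (0 - B * (-a / (1 - t * a))) t :=
      (hasDerivAt_const t _).sub (h2.const_mul B)
    have he : (0 - B * (-a / (1 - t * a))) = E' t := by rw [hE']; ring
    rw [hE]
    exact (he ▸ h3).hasDerivWithinAt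
  have hE0 : ‖g 0‖ ≤ E 0 := by
    rw [hg, hE]
    simp [hsl]
  have hbound : ∀ t ∈ Set.Ico (0:ℝ) 1, ‖g' t‖ ≤ E' t := by
    intro t ht
    have hta : 0 < 1 - t * a := by nlinarith [ht.1, ht.2]
    have htmem : Function.update z j ((t:ℂ) * z j) ∈ polydisc n :=
      mem_polydisc_update hz j (mem_ball01.mp (hmem t ⟨ht.1, ht.2.le⟩))
    have hpd : pderivAt n j f (Function.update z j ((t:ℂ) * z j)) =
        deriv sl ((t:ℂ) * z j) := by
      simp only [pderivAt, Function.update_idem, Function.update_self, hsl]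
    have habs : ‖Function.update z j ((t:ℂ) * z j) j‖ = t * a := by
      rw [Function.update_self, norm_mul, Complex.norm_real, Real.norm_eq_abs, abs_of_nonneg ht.1, ha]
    have := hB _ htmem j
    rw [hpd, habs] at this
    have h4 : t * a ≤ a := by nlinarith [mul_nonneg (by linarith [ht.2] : (0:ℝ) ≤ 1 - t) ha0]
    have hta' : t * a < 1 := lt_of_le_of_lt h4 ha1
    have h5 : (t*a)^2 ≤ t*a := by
      nlinarith [mul_nonneg (mul_nonneg ht.1 ha0) (by linarith : (0:ℝ) ≤ 1 - t*a)]
    have hq : (1 : ℝ) - (t*a)^2 > 0 := by nlinarith [mul_nonneg ht.1 ha0]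
    have hder : ‖deriv sl ((t:ℂ) * z j)‖ ≤ B / (1 - (t*a)^2) := by
      rw [le_div_iff₀ hq]; linarith [this]
    rw [hg', hE']
    rw [norm_mul, ← ha]
    calc ‖deriv sl ((t:ℂ) * z j)‖ * a ≤ (B / (1 - (t*a)^2)) * a := by
          apply mul_le_mul_of_nonneg_right hder ha0
      _ ≤ B * a / (1 - t * a) := by
          rw [div_mul_eq_mul_div, div_le_div_iff₀ (by positivity) hta]
          nlinarith [mul_nonneg hB0 ha0, h5]
  have key := image_norm_le_of_norm_deriv_right_le_deriv_boundary' hgc hgd hE0 hEc hEd hbound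
    (Set.right_mem_Icc.mpr zero_le_one)
  have hg1 : g 1 = f z := by
    rw [hg]; simp [hsl]
  rw [hg1] at key
  have hfin : E 1 ≤ ‖f (Function.update z j 0)‖ +
      B * Real.log (2 / (1 - a ^ 2)) := by
    rw [hE]
    simp only [one_mul]
    have h1a : 0 < 1 - a := by linarith
    have h2 : 0 < 1 - a ^ 2 := one_sub_sq_pos ha0 ha1
    have hlog : -Real.log (1 - a) ≤ Real.log (2 / (1 - a ^ 2)) := by
      rw [← Real.log_inv]
      apply Real.log_le_log (by positivity)
      rw [inv_eq_one_div, div_le_div_iff₀ h1a h2]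
      nlinarith
    nlinarith [hB0, hlog]
  exact le_trans key hfin
lemma growth {n : ℕ} {f : (Fin n → ℂ) → ℂ} (hf : SepHolo n f) {B : ℝ} (hB0 : 0 ≤ B)
    (hB : ∀ w ∈ polydisc n, ∀ j : Fin n,
      (1 - ‖w j‖ ^ 2) * ‖pderivAt n j f w‖ ≤ B)
    (hf0 : ‖f 0‖ ≤ B) :
    ∀ z ∈ polydisc n, ‖f z‖ ≤
      B + B * ∑ j, Real.log (2 / (1 - ‖z j‖ ^ 2)) := by
  have main : ∀ S : Finset (Fin n), ∀ z ∈ polydisc n, (∀ j ∉ S, z j = 0) →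
      ‖f z‖ ≤ B + B * ∑ j ∈ S, Real.log (2 / (1 - ‖z j‖ ^ 2)) := by
    intro S
    induction S using Finset.induction_on with
    | empty =>
      intro z hz hz0
      have : z = 0 := funext fun j => hz0 j (Finset.notMem_empty j)
      rw [this]
      simpa using hf0
    | @insert j S hj ih =>
      intro z hz hz0
      have hz' : Function.update z j 0 ∈ polydisc n :=
        mem_polydisc_update hz j (by simp)
      have hz0' : ∀ k ∉ S, Function.update z j 0 k = 0 := by
        intro k hk
        rcases eq_or_ne k j with rfl | hkj
        · simp
        · rw [Function.update_of_ne hkj]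
          exact hz0 k (by simp [hkj, hk])
      have ihv := ih _ hz' hz0'
      have hsum : ∑ k ∈ S, Real.log (2 / (1 - ‖Function.update z j 0 k‖ ^ 2)) =
          ∑ k ∈ S, Real.log (2 / (1 - ‖z k‖ ^ 2)) := by
        apply Finset.sum_congr rfl
        intro k hk
        rw [Function.update_of_ne (fun h : k = j => hj (h ▸ hk))]
      rw [hsum] at ihv
      have hstep := growth_step hf hB0 hB hz j
      rw [Finset.sum_insert hj]
      linarith
  intro z hz
  exact main Finset.univ z hz (fun j hj => absurd (Finset.mem_univ j) hj)

lemma mderiv_append {n : ℕ} (l₁ l₂ : List (Fin n)) (F : (Fin n → ℂ) → ℂ) :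
    mderiv n (l₁ ++ l₂) F = mderiv n l₁ (mderiv n l₂ F) := by
  induction l₁ with
  | nil => rfl
  | cons j l ih => show pderivAt n j (mderiv n (l ++ l₂) F) = _; rw [ih]; rfl

lemma splits_mem {n : ℕ} : ∀ (l : List (Fin n)) (p : List (Fin n) × List (Fin n)),
    p ∈ splits l → p.1.Sublist l ∧ p.2.Sublist l ∧ (p.1 ++ p.2).Perm l := by
  intro l
  induction l with
  | nil =>
    intro p hp
    simp only [splits, List.mem_singleton] at hp
    subst hp
    exact ⟨List.Sublist.refl _, List.Sublist.refl _, List.Perm.refl _⟩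
  | cons j l ih =>
    intro p hp
    rw [splits, List.mem_append, List.mem_map, List.mem_map] at hp
    rcases hp with ⟨q, hq, rfl⟩ | ⟨q, hq, rfl⟩
    · obtain ⟨h1, h2, h3⟩ := ih q hq
      exact ⟨h1.cons_cons j, h2.cons j, h3.cons j⟩
    · obtain ⟨h1, h2, h3⟩ := ih q hq
      refine ⟨h1.cons j, h2.cons_cons j, ?_⟩
      exact List.perm_middle.trans (h3.cons j)

lemma splits_length {n : ℕ} : ∀ l : List (Fin n), (splits l).length = 2 ^ l.length := by
  intro l
  induction l with
  | nil => rfl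
  | cons j l ih =>
    rw [splits, List.length_append, List.length_map, List.length_map, ih, List.length_cons]
    ring
lemma list_abs_sum_le (l : List ℂ) : ‖l.sum‖ ≤ (l.map norm).sum := by
  induction l with
  | nil => simp
  | cons a l ih =>
    simp only [List.sum_cons, List.map_cons]
    exact le_trans (norm_add_le _ _) (by linarith)

lemma list_mul_sum (l : List ℂ) (a : ℝ) :
    a * (l.map norm).sum = ((l.map norm).map (fun x => a * x)).sum := by
  induction l with
  | nil => simp
  | cons b l ih => simp only [List.map_cons, List.sum_cons]; rw [mul_add, ih]

/-- The product-Bloch quantity `|f(0)| + ∏ⱼ(1-|zⱼ|²)·|∂ⁿf/∂z₁⋯∂zₙ(z)|`. -/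
noncomputable def prodBlochExpr (n : ℕ) (f : (Fin n → ℂ) → ℂ) (z : Fin n → ℂ) : ℝ :=
  ‖f 0‖ +
    (∏ j, (1 - ‖z j‖ ^ 2)) * ‖mderiv n (List.finRange n) f z‖

/-- The sum-Bloch quantity `|f(0)| + Σⱼ(1-|zⱼ|²)·|∂f/∂zⱼ(z)|`. -/
noncomputable def sumBlochExpr (n : ℕ) (f : (Fin n → ℂ) → ℂ) (z : Fin n → ℂ) : ℝ :=
  ‖f 0‖ +
    ∑ j, (1 - ‖z j‖ ^ 2) * ‖pderivAt n j f z‖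

/-- If `φ ∈ H^∞(Dⁿ) ∩ 𝔹_L(Dⁿ)` then `φ` multiplies the sum Bloch space `𝔹(Dⁿ)` into the
product Bloch space `B(Dⁿ)`, with `‖φf‖_B ≤ C(‖φ‖_∞ + ‖φ‖_{𝔹_L})‖f‖_𝔹`. -/
theorem sum_to_prod_bloch_multiplier_sufficiency (n : ℕ) :
    ∃ C : ℝ, 0 < C ∧
      ∀ (φ f : (Fin n → ℂ) → ℂ) (Mφ ML B : ℝ),
        DifferentiableOn ℂ φ (polydisc n) →
        DifferentiableOn ℂ f (polydisc n) →
        (∀ z ∈ polydisc n, ‖φ z‖ ≤ Mφ) →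
        (∀ z ∈ polydisc n,
          ‖φ 0‖ +
            (∏ j, (1 - ‖z j‖ ^ 2)) *
              (∑ j, Real.log (2 / (1 - ‖z j‖ ^ 2))) *
              ‖mderiv n (List.finRange n) φ z‖ ≤ ML) →
        (∀ z ∈ polydisc n, sumBlochExpr n f z ≤ B) →
        ∀ z ∈ polydisc n, prodBlochExpr n (φ * f) z ≤ C * (Mφ + ML) * B := by
  refine ⟨1 + 3 * 2 ^ n + 128 ^ n, by positivity, ?_⟩
  intro φ f Mφ ML B hφd hfd hMφ hML hB z hz
  have h0p : (0 : Fin n → ℂ) ∈ polydisc n := by intro j; simp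
  have hφS : SepHolo n φ := SepHolo.of_differentiableOn hφd
  have hfS : SepHolo n f := SepHolo.of_differentiableOn hfd
  have hφ0 : ‖φ 0‖ ≤ Mφ := hMφ 0 h0p
  have hMφ0 : 0 ≤ Mφ := le_trans (norm_nonneg _) hφ0
  have hsB0 : ‖f 0‖ ≤ sumBlochExpr n f 0 := by
    rw [sumBlochExpr]
    apply le_add_of_nonneg_right
    apply Finset.sum_nonneg
    intro j _
    have : ‖(0 : Fin n → ℂ) j‖ = 0 := by simp
    apply mul_nonneg _ (norm_nonneg _)
    rw [this]; norm_num
  have hf0 : ‖f 0‖ ≤ B := le_trans hsB0 (hB 0 h0p)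
  have hB0 : 0 ≤ B := le_trans (norm_nonneg _) hf0
  have hML0 : 0 ≤ ML := by
    refine le_trans ?_ (hML 0 h0p)
    have h1 : (0:ℝ) ≤ (∏ j : Fin n, (1 - ‖(0 : Fin n → ℂ) j‖ ^ 2)) *
        (∑ j : Fin n, Real.log (2 / (1 - ‖(0 : Fin n → ℂ) j‖ ^ 2))) *
        ‖mderiv n (List.finRange n) φ 0‖ := by
      apply mul_nonneg _ (norm_nonneg _)
      apply mul_nonneg
      · apply Finset.prod_nonneg; intro j _; simp
      · apply Finset.sum_nonneg; intro j _
        apply Real.log_nonneg; simp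
    positivity
  have hfderiv : ∀ w ∈ polydisc n, ∀ j : Fin n,
      (1 - ‖w j‖ ^ 2) * ‖pderivAt n j f w‖ ≤ B := by
    intro w hw j
    have hsum := hB w hw
    rw [sumBlochExpr] at hsum
    have hterm : (1 - ‖w j‖ ^ 2) * ‖pderivAt n j f w‖ ≤
        ∑ k : Fin n, (1 - ‖w k‖ ^ 2) * ‖pderivAt n k f w‖ := by
      apply Finset.single_le_sum _ (Finset.mem_univ j)
      intro k _
      exact mul_nonneg (one_sub_sq_pos (norm_nonneg _) (hw k)).le
        (norm_nonneg _)
    have h0 := norm_nonneg (f 0)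
    linarith
  set PZ : ℝ := ∏ j, (1 - ‖z j‖ ^ 2) with hPZ
  have hPZpos : 0 < PZ := by
    apply Finset.prod_pos
    intro j _
    exact one_sub_sq_pos (norm_nonneg _) (hz j)
  set Lsum : ℝ := ∑ j, Real.log (2 / (1 - ‖z j‖ ^ 2)) with hLsum
  -- bound each Leibniz term
  have helem : ∀ p ∈ splits (List.finRange n),
      PZ * (‖mderiv n p.1 φ z‖ * ‖mderiv n p.2 f z‖) ≤
        3 * ML * B + 64 ^ n * Mφ * B + Mφ * B := by
    intro p hp
    obtain ⟨hsub1, hsub2, hperm⟩ := splits_mem (List.finRange n) p hp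
    have hnodup : (p.1 ++ p.2).Nodup := hperm.symm.nodup (List.nodup_finRange n)
    obtain ⟨h1n, h2n, hdis⟩ := List.nodup_append.mp hnodup
    have htofin : p.1.toFinset ∪ p.2.toFinset = Finset.univ := by
      rw [← List.toFinset_append, List.toFinset_eq_of_perm _ _ hperm,
        List.toFinset_finRange]
    have hfdis : Disjoint p.1.toFinset p.2.toFinset :=
      List.disjoint_toFinset_iff_disjoint.mpr (fun a ha hb => hdis a ha a hb rfl)
    rcases List.eq_nil_or_concat p.2 with h2eq | ⟨l₂, j₀, h2eq⟩
    · -- p.2 = [] : the term with the full derivative on φ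
      rw [h2eq] at hperm ⊢
      have h1eq : p.1 = List.finRange n := by
        apply hsub1.eq_of_length
        simpa using hperm.length_eq
      rw [h1eq]
      have hm0 : mderiv n ([] : List (Fin n)) f z = f z := rfl
      rw [hm0]
      rcases Nat.eq_zero_or_pos n with hn0 | hn
      · -- n = 0 : direct bound
        subst hn0
        have hz0 : z = 0 := Subsingleton.elim z 0
        have hPZ1 : PZ = 1 := by rw [hPZ]; simp
        have hmφ : mderiv 0 (List.finRange 0) φ z = φ z := by
          rw [show List.finRange 0 = ([] : List (Fin 0)) from rfl]; rfl
        rw [hPZ1, hmφ, one_mul]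
        have h1 : ‖φ z‖ ≤ Mφ := hMφ z hz
        have h2 : ‖f z‖ ≤ B := by rw [hz0]; exact hf0
        have h3 : (0:ℝ) ≤ 3 * ML * B + 64 ^ 0 * Mφ * B := by positivity
        nlinarith [norm_nonneg (φ z), norm_nonneg (f z)]
      · -- n ≥ 1 : use the 𝔹_L bound and the growth estimate
        have hlog2 : (0:ℝ) < Real.log 2 := Real.log_pos (by norm_num)
        have hlog2' : (1:ℝ)/2 ≤ Real.log 2 := by
          have := Real.log_two_gt_d9; linarith
        have hterm_le : ∀ j : Fin n, Real.log 2 ≤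
            Real.log (2 / (1 - ‖z j‖ ^ 2)) := by
          intro j
          apply Real.log_le_log (by norm_num)
          have h2 := one_sub_sq_pos (norm_nonneg (z j)) (hz j)
          rw [le_div_iff₀ h2]
          nlinarith [sq_nonneg (‖z j‖)]
        have hLge : Real.log 2 ≤ Lsum := by
          rw [hLsum]
          calc Real.log 2 ≤ Real.log (2 / (1 - ‖z ⟨0, hn⟩‖ ^ 2)) :=
                hterm_le ⟨0, hn⟩
            _ ≤ ∑ j, Real.log (2 / (1 - ‖z j‖ ^ 2)) := by
                exact Finset.single_le_sum
                  (f := fun j => Real.log (2 / (1 - ‖z j‖ ^ 2)))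
                  (fun k _ => le_trans hlog2.le (hterm_le k)) (Finset.mem_univ _)
        have hLpos : 0 < Lsum := lt_of_lt_of_le hlog2 hLge
        have hmlphi : PZ * ‖mderiv n (List.finRange n) φ z‖ * Lsum ≤ ML := by
          have := hML z hz
          have h0 := norm_nonneg (φ 0)
          rw [← hPZ, ← hLsum] at this
          nlinarith
        have hfz := growth hfS hB0 hfderiv hf0 z hz
        rw [← hLsum] at hfz
        have habs1 : 0 ≤ ‖mderiv n (List.finRange n) φ z‖ :=
          norm_nonneg _
        have habs2 : 0 ≤ ‖f z‖ := norm_nonneg _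
        have hkey : PZ * (‖mderiv n (List.finRange n) φ z‖ *
            ‖f z‖) ≤ 3 * ML * B := by
          have hPm : 0 ≤ PZ * ‖mderiv n (List.finRange n) φ z‖ := by positivity
          have step1 : PZ * (‖mderiv n (List.finRange n) φ z‖ *
              ‖f z‖) ≤
              (PZ * ‖mderiv n (List.finRange n) φ z‖) * (B + B * Lsum) := by
            rw [← mul_assoc]
            exact mul_le_mul_of_nonneg_left hfz hPm
          refine step1.trans ?_
          have hexp : (PZ * ‖mderiv n (List.finRange n) φ z‖) * Lsum ≤ ML :=
            hmlphi
          nlinarith [mul_nonneg hPm hB0, mul_nonneg (mul_nonneg hPm hB0) hLpos.le,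
            mul_le_mul_of_nonneg_right hexp hB0]
        have h3 : (0:ℝ) ≤ 64 ^ n * Mφ * B + Mφ * B := by positivity
        linarith
    · -- p.2 = l₂ ++ [j₀] ≠ []
      rw [List.concat_eq_append] at h2eq
      rw [h2eq] at hsub2 h2n htofin hfdis ⊢
      have hφbd : ∀ w ∈ polydisc n, ‖φ w‖ ≤
          Mφ * ∏ k ∈ (∅ : Finset (Fin n)), (1 - ‖w k‖ ^ 2)⁻¹ := by
        intro w hw; simpa using hMφ w hw
      have hφest := iterated_cauchy p.1 h1n ∅ (by simp) hφS hMφ0 hφbd z hz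
      rw [Finset.empty_union] at hφest
      -- the f part
      have h2n' := h2n
      rw [List.nodup_append] at h2n'
      obtain ⟨hl₂n, _, hl₂dis⟩ := h2n'
      have hj₀l₂ : ∀ i ∈ l₂, i ∉ ({j₀} : Finset (Fin n)) := by
        intro i hi
        rw [Finset.mem_singleton]
        intro h; subst h
        exact hl₂dis _ hi _ (List.mem_singleton_self _) rfl
      have hGbd : ∀ w ∈ polydisc n, ‖pderivAt n j₀ f w‖ ≤
          B * ∏ k ∈ ({j₀} : Finset (Fin n)), (1 - ‖w k‖ ^ 2)⁻¹ := by
        intro w hw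
        rw [Finset.prod_singleton, ← div_eq_mul_inv,
          le_div_iff₀ (one_sub_sq_pos (norm_nonneg _) (hw j₀))]
        linarith [hfderiv w hw j₀]
      have hfest := iterated_cauchy l₂ hl₂n {j₀} hj₀l₂ (hfS.pderiv j₀) hB0 hGbd z hz
      have hmdeq : mderiv n (l₂ ++ [j₀]) f = mderiv n l₂ (pderivAt n j₀ f) :=
        mderiv_append l₂ [j₀] f
      have htof2 : ({j₀} : Finset (Fin n)) ∪ l₂.toFinset = (l₂ ++ [j₀]).toFinset := by
        rw [List.toFinset_append]
        simp [Finset.union_comm]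
      rw [htof2] at hfest
      rw [hmdeq]
      -- combine
      set P₁ : ℝ := ∏ k ∈ p.1.toFinset, (1 - ‖z k‖ ^ 2)⁻¹ with hP₁
      set P₂ : ℝ := ∏ k ∈ (l₂ ++ [j₀]).toFinset, (1 - ‖z k‖ ^ 2)⁻¹ with hP₂
      have hP₁0 : 0 ≤ P₁ := by
        apply Finset.prod_nonneg; intro k _
        have := one_sub_sq_pos (norm_nonneg (z k)) (hz k); positivity
      have hP₂0 : 0 ≤ P₂ := by
        apply Finset.prod_nonneg; intro k _
        have := one_sub_sq_pos (norm_nonneg (z k)) (hz k); positivity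
      have hcancel : PZ * (P₁ * P₂) = 1 := by
        rw [hP₁, hP₂, ← Finset.prod_union hfdis, htofin, hPZ, ← Finset.prod_mul_distrib]
        apply Finset.prod_eq_one
        intro k _
        exact mul_inv_cancel₀ (one_sub_sq_pos (norm_nonneg (z k)) (hz k)).ne'
      have hlen1 : p.1.length ≤ n := by
        have := hsub1.length_le; simpa using this
      have hlen2 : l₂.length ≤ n := by
        have h := hsub2.length_le
        rw [List.length_append, List.length_singleton, List.length_finRange] at h
        omega
      have hpow1 : (8:ℝ) ^ p.1.length ≤ 8 ^ n :=
        pow_le_pow_right₀ (by norm_num) hlen1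
      have hpow2 : (8:ℝ) ^ l₂.length ≤ 8 ^ n :=
        pow_le_pow_right₀ (by norm_num) hlen2
      have habs1 := norm_nonneg (mderiv n p.1 φ z)
      have habs2 := norm_nonneg (mderiv n l₂ (pderivAt n j₀ f) z)
      have step : PZ * (‖mderiv n p.1 φ z‖ *
          ‖mderiv n l₂ (pderivAt n j₀ f) z‖) ≤
          PZ * ((8 ^ p.1.length * Mφ * P₁) * (8 ^ l₂.length * B * P₂)) := by
        apply mul_le_mul_of_nonneg_left _ hPZpos.le
        apply mul_le_mul hφest hfest habs2
        positivity
      refine le_trans step ?_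
      have heq : PZ * ((8 ^ p.1.length * Mφ * P₁) * (8 ^ l₂.length * B * P₂)) =
          (8 ^ p.1.length * 8 ^ l₂.length) * Mφ * B * (PZ * (P₁ * P₂)) := by ring
      rw [heq, hcancel, mul_one]
      have h88 : (8:ℝ) ^ p.1.length * 8 ^ l₂.length ≤ 64 ^ n := by
        calc (8:ℝ) ^ p.1.length * 8 ^ l₂.length ≤ 8 ^ n * 8 ^ n := by
              apply mul_le_mul hpow1 hpow2 (by positivity) (by positivity)
          _ = 64 ^ n := by rw [← mul_pow]; norm_num
      have hMB : 0 ≤ Mφ * B := by positivity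
      have h3 : (0:ℝ) ≤ 3 * ML * B + Mφ * B := by positivity
      nlinarith [mul_le_mul_of_nonneg_right h88 hMB]
  -- assemble
  rw [prodBlochExpr]
  have hterm1 : ‖(φ * f) 0‖ ≤ Mφ * B := by
    rw [Pi.mul_apply, norm_mul]
    exact mul_le_mul hφ0 hf0 (norm_nonneg _) hMφ0
  have hleib : mderiv n (List.finRange n) (φ * f) z =
      ((splits (List.finRange n)).map
        (fun p => mderiv n p.1 φ z * mderiv n p.2 f z)).sum := by
    have : (φ * f) = fun w => φ w * f w := rfl
    rw [this]
    exact leibniz hφS hfS (List.finRange n) z hz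
  rw [hleib, ← hPZ]
  have habs : ‖((splits (List.finRange n)).map
      (fun p => mderiv n p.1 φ z * mderiv n p.2 f z)).sum‖ ≤
      (((splits (List.finRange n)).map
        (fun p => mderiv n p.1 φ z * mderiv n p.2 f z)).map norm).sum :=
    list_abs_sum_le _
  have hmain : PZ * ‖((splits (List.finRange n)).map
      (fun p => mderiv n p.1 φ z * mderiv n p.2 f z)).sum‖ ≤
      2 ^ n * (3 * ML * B + 64 ^ n * Mφ * B + Mφ * B) := by
    refine le_trans (mul_le_mul_of_nonneg_left habs hPZpos.le) ?_
    rw [list_mul_sum]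
    have hlen2 : ((((splits (List.finRange n)).map
        (fun p => mderiv n p.1 φ z * mderiv n p.2 f z)).map norm).map
        (fun x => PZ * x)).length = 2 ^ n := by
      simp [splits_length, List.length_finRange]
    calc ((((splits (List.finRange n)).map
        (fun p => mderiv n p.1 φ z * mderiv n p.2 f z)).map norm).map
          (fun x => PZ * x)).sum ≤ _ • (3 * ML * B + 64 ^ n * Mφ * B + Mφ * B) := by
          apply List.sum_le_card_nsmul
          intro x hx
          simp only [List.map_map, List.mem_map, Function.comp] at hx
          obtain ⟨p, hp, rfl⟩ := hx
          rw [norm_mul]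
          exact helem p hp
      _ = 2 ^ n * (3 * ML * B + 64 ^ n * Mφ * B + Mφ * B) := by
          rw [hlen2, nsmul_eq_mul]
          norm_num
  have hfin : Mφ * B + 2 ^ n * (3 * ML * B + 64 ^ n * Mφ * B + Mφ * B) ≤
      (1 + 3 * 2 ^ n + 128 ^ n) * (Mφ + ML) * B := by
    have h1 : (2:ℝ) ^ n * 64 ^ n = 128 ^ n := by rw [← mul_pow]; norm_num
    have h2 : (1:ℝ) ≤ 2 ^ n := one_le_pow₀ (by norm_num)
    nlinarith [mul_nonneg hMφ0 hB0, mul_nonneg hML0 hB0,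
      pow_nonneg (by norm_num : (0:ℝ) ≤ 2) n, pow_nonneg (by norm_num : (0:ℝ) ≤ 64) n,
      pow_nonneg (by norm_num : (0:ℝ) ≤ 128) n,
      mul_nonneg (mul_nonneg (pow_nonneg (by norm_num : (0:ℝ) ≤ 64) n) hMφ0) hB0,
      mul_nonneg (mul_nonneg (pow_nonneg (by norm_num : (0:ℝ) ≤ 128) n) hMφ0) hB0,
      mul_nonneg (mul_nonneg (pow_nonneg (by norm_num : (0:ℝ) ≤ 2) n) hML0) hB0]
  linarith [hmain]
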